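/- Let S and A be types, γ ∈ (0,1), δ > 0, ε ≥ 0. Let Q : S × A → ℝ, r : S × A → ℝ, V : S → ℝ, f : S × A → S satisfy Q(s,a) = r(s,a) + γ·V(f(s,a)) for all s, a, and suppose V is δ-separable, i.e. |V(s) − V(x)| > δ for all s ≠ x. Let Q̂ : S × A → ℝ and V̂ : S → ℝ satisfy |Q̂(s,a) − Q(s,a)| ≤ ε for all s, a and |V̂(x) − V(x)| ≤ ε for all x. Then for every s ∈ S, a ∈ A, and every x ∈ S with x ≠ f(s,a), we have |V̂(x) − (Q̂(s,a) − r(s,a))/γ| > δ − ε − ε/γ. -/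

import Mathlib

/-- Intermediate claim in the proof of Theorem 2: every state other than the true
successor has estimated value bounded away from the scanned value by `δ - ε - ε / γ`. -/
theorem stmt_9 {S A : Type*} (γ δ ε : ℝ)
    (hγ0 : 0 < γ) (hγ1 : γ < 1) (hδ : 0 < δ) (hε : 0 ≤ ε)
    (Q r : S × A → ℝ) (V : S → ℝ) (f : S × A → S)
    (hbell : ∀ s a, Q (s, a) = r (s, a) + γ * V (f (s, a)))
    (hsep : ∀ s x : S, s ≠ x → δ < |V s - V x|)
    (Qhat : S × A → ℝ) (Vhat : S → ℝ)
    (hQ : ∀ s a, |Qhat (s, a) - Q (s, a)| ≤ ε)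
    (hVe : ∀ x, |Vhat x - V x| ≤ ε) :
    ∀ (s : S) (a : A) (x : S), x ≠ f (s, a) →
      δ - ε - ε / γ < |Vhat x - (Qhat (s, a) - r (s, a)) / γ| := by
  intro s a x hx
  have hsep' := hsep x (f (s, a)) hx
  have hV := hVe x
  have hQ' := hQ s a
  have hscan : (Qhat (s, a) - r (s, a)) / γ - V (f (s, a))
      = (Qhat (s, a) - Q (s, a)) / γ := by
    field_simp
    rw [hbell s a]; ring
  have h1 : |(Qhat (s, a) - r (s, a)) / γ - V (f (s, a))| ≤ ε / γ := by
    rw [hscan, abs_div, abs_of_pos hγ0]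
    exact div_le_div_of_nonneg_right hQ' hγ0.le
  have key : |V x - V (f (s, a))| ≤
      |Vhat x - V x| + |Vhat x - (Qhat (s, a) - r (s, a)) / γ|
        + |(Qhat (s, a) - r (s, a)) / γ - V (f (s, a))| := by
    have := abs_sub_abs_le_abs_sub (V x - V (f (s,a))) 0
    calc |V x - V (f (s, a))|
        = |(V x - Vhat x) + (Vhat x - (Qhat (s, a) - r (s, a)) / γ)
            + ((Qhat (s, a) - r (s, a)) / γ - V (f (s, a)))| := by ring_nf
      _ ≤ _ := by
          refine (abs_add_le _ _).trans (add_le_add_left ((abs_add_le _ _).trans ?_) _)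
          rw [abs_sub_comm (V x)]
  linarith
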